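/- Let Q ∈ ℝ^{n×n} be symmetric positive definite, A ∈ ℝ^{n×n}, B ∈ ℝ^{n×m}, R ∈ ℝ^{m×m} symmetric positive definite, and ū ∈ ℝ^m. Suppose there exist scalars α, β ≥ 0 such that −E − αF − βS ⪰ 0, where E = [[AᵀQ+QA, 0, QB],[0, 0, 0],[BᵀQ, 0, 0]], F = [[Q, 0, 0],[0, −1, 0],[0, 0, 0]], and S = [[0, 0, 0],[0, 1−ūᵀRū, ūᵀR],[0, Rū, −R]]. Then for every t₀ ∈ ℝ, every differentiable function ζ : ℝ → ℝ^n, and every function u_c : ℝ → ℝ^m such that for all t ≥ t₀ one has ζ′(t) = Aζ(t) + Bu_c(t) and (u_c(t)−ū)ᵀR(u_c(t)−ū) ≤ 1, the implication holds: if ζ(t₀)ᵀQζ(t₀) ≤ 1 then ζ(t)ᵀQζ(t) ≤ 1 for all t ≥ t₀. -/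

import Mathlib

open Matrix

/-- 3×3 block matrix. -/
def blk3 {α β γ : Type*} (M11 : Matrix α α ℝ) (M12 : Matrix α β ℝ) (M13 : Matrix α γ ℝ)
    (M21 : Matrix β α ℝ) (M22 : Matrix β β ℝ) (M23 : Matrix β γ ℝ)
    (M31 : Matrix γ α ℝ) (M32 : Matrix γ β ℝ) (M33 : Matrix γ γ ℝ) :
    Matrix (α ⊕ (β ⊕ γ)) (α ⊕ (β ⊕ γ)) ℝ :=
  Matrix.fromBlocks M11 (Matrix.of fun i j => Sum.elim (M12 i) (M13 i) j)
    (Matrix.of fun i j => Sum.elim (fun b => M21 b j) (fun c => M31 c j) i)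
    (Matrix.fromBlocks M22 M23 M32 M33)

/-- 1×1 matrix with entry `c`. -/
def sc (c : ℝ) : Matrix (Fin 1) (Fin 1) ℝ := Matrix.of fun _ _ => c

/-- column matrix of a vector. -/
def colV {α : Type*} (v : α → ℝ) : Matrix α (Fin 1) ℝ := Matrix.of fun i _ => v i

/-- row matrix of a vector. -/
def rowV {α : Type*} (v : α → ℝ) : Matrix (Fin 1) α ℝ := Matrix.of fun _ j => v j

lemma quad_blk3 {α β γ : Type*} [Fintype α] [Fintype β] [Fintype γ]
    (M11 : Matrix α α ℝ) (M12 : Matrix α β ℝ) (M13 : Matrix α γ ℝ)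
    (M21 : Matrix β α ℝ) (M22 : Matrix β β ℝ) (M23 : Matrix β γ ℝ)
    (M31 : Matrix γ α ℝ) (M32 : Matrix γ β ℝ) (M33 : Matrix γ γ ℝ)
    (x : α → ℝ) (y : β → ℝ) (w : γ → ℝ) :
    (Sum.elim x (Sum.elim y w)) ⬝ᵥ (blk3 M11 M12 M13 M21 M22 M23 M31 M32 M33 *ᵥ Sum.elim x (Sum.elim y w))
    = x ⬝ᵥ (M11 *ᵥ x) + x ⬝ᵥ (M12 *ᵥ y) + x ⬝ᵥ (M13 *ᵥ w)
      + y ⬝ᵥ (M21 *ᵥ x) + y ⬝ᵥ (M22 *ᵥ y) + y ⬝ᵥ (M23 *ᵥ w)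
      + w ⬝ᵥ (M31 *ᵥ x) + w ⬝ᵥ (M32 *ᵥ y) + w ⬝ᵥ (M33 *ᵥ w) := by
  simp [blk3, fromBlocks, dotProduct, mulVec, Fintype.sum_sum_type, Finset.mul_sum,
    Finset.sum_add_distrib, mul_add]
  ring

lemma hasDerivAt_quadForm {n : ℕ} (Q : Matrix (Fin n) (Fin n) ℝ) (ζ : ℝ → Fin n → ℝ) (t : ℝ)
    (d : Fin n → ℝ) (hd : HasDerivAt ζ d t) :
    HasDerivAt (fun s => ζ s ⬝ᵥ (Q *ᵥ ζ s)) (d ⬝ᵥ (Q *ᵥ ζ t) + ζ t ⬝ᵥ (Q *ᵥ d)) t := by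
  have hcoord : ∀ i, HasDerivAt (fun s => ζ s i) (d i) t := fun i => (hasDerivAt_pi.mp hd) i
  have key : ∀ i j : Fin n, HasDerivAt (fun s => ζ s i * (Q i j * ζ s j))
      (d i * (Q i j * ζ t j) + ζ t i * (Q i j * d j)) t :=
    fun i j => (hcoord i).mul ((hcoord j).const_mul (Q i j))
  have hsum : HasDerivAt (fun s => ∑ i, ∑ j, ζ s i * (Q i j * ζ s j))
      (∑ i, ∑ j, (d i * (Q i j * ζ t j) + ζ t i * (Q i j * d j))) t := by
    apply HasDerivAt.fun_sum
    intro i _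
    exact HasDerivAt.fun_sum fun j _ => key i j
  convert hsum using 1
  · funext s
    simp [dotProduct, mulVec, Finset.mul_sum]
  · simp [dotProduct, mulVec, Finset.mul_sum, Finset.sum_add_distrib]

lemma dp_swap {k l : ℕ} (A : Matrix (Fin k) (Fin l) ℝ) (x : Fin l → ℝ) (v : Fin k → ℝ) :
    (A *ᵥ x) ⬝ᵥ v = x ⬝ᵥ (Aᵀ *ᵥ v) := by
  simp [dotProduct, mulVec, Finset.sum_mul, Finset.mul_sum]
  rw [Finset.sum_comm]
  apply Finset.sum_congr rfl; intro i _
  apply Finset.sum_congr rfl; intro j _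
  ring

/-- Non-stealthy variant of Lemma 1 (Remark 3). -/
theorem invariant_ellipsoidal_set_nonstealthy {n m : ℕ}
    (Q A : Matrix (Fin n) (Fin n) ℝ) (B : Matrix (Fin n) (Fin m) ℝ)
    (R : Matrix (Fin m) (Fin m) ℝ) (ubar : Fin m → ℝ)
    (hQ : Q.PosDef) (hR : R.PosDef)
    (E F S : Matrix ((Fin n) ⊕ ((Fin 1) ⊕ (Fin m))) ((Fin n) ⊕ ((Fin 1) ⊕ (Fin m))) ℝ)
    (hE : E = blk3 (Aᵀ * Q + Q * A) 0 (Q * B)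
                   0 0 0
                   (Bᵀ * Q) 0 0)
    (hF : F = blk3 Q 0 0
                   0 (sc (-1)) 0
                   0 0 0)
    (hS : S = blk3 0 0 0
                   0 (sc (1 - ubar ⬝ᵥ (R *ᵥ ubar))) (rowV (ubar ᵥ* R))
                   0 (colV (R *ᵥ ubar)) (-R))
    (α β : ℝ) (hα : 0 ≤ α) (hβ : 0 ≤ β)
    (hLMI : (-E - α • F - β • S).PosSemidef) :
    ∀ (t₀ : ℝ) (ζ : ℝ → Fin n → ℝ) (u : ℝ → Fin m → ℝ),
      Differentiable ℝ ζ →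
      (∀ t, t₀ ≤ t → deriv ζ t = A *ᵥ ζ t + B *ᵥ u t) →
      (∀ t, t₀ ≤ t → (u t - ubar) ⬝ᵥ (R *ᵥ (u t - ubar)) ≤ 1) →
      (ζ t₀) ⬝ᵥ (Q *ᵥ ζ t₀) ≤ 1 →
      ∀ t, t₀ ≤ t → (ζ t) ⬝ᵥ (Q *ᵥ ζ t) ≤ 1 := by
  intro t₀ ζ u hζd hode huc h0 t ht
  set V : ℝ → ℝ := fun s => ζ s ⬝ᵥ (Q *ᵥ ζ s) with hVdef
  have hVderiv : ∀ s, HasDerivAt V (deriv ζ s ⬝ᵥ (Q *ᵥ ζ s) + ζ s ⬝ᵥ (Q *ᵥ deriv ζ s)) s :=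
    fun s => hasDerivAt_quadForm Q ζ s _ (hζd s).hasDerivAt
  -- key differential inequality
  have hkey : ∀ s, t₀ ≤ s → deriv V s ≤ α * (1 - V s) := by
    intro s hs
    set x := ζ s with hx
    set w := u s with hw
    set y : Fin 1 → ℝ := fun _ => 1
    set z : (Fin n) ⊕ ((Fin 1) ⊕ (Fin m)) → ℝ := Sum.elim x (Sum.elim y w) with hz
    have hpos := hLMI.dotProduct_mulVec_nonneg z
    have hstar : star z = z := by simp
    rw [hstar] at hpos
    have hexpand : z ⬝ᵥ ((-E - α • F - β • S) *ᵥ z)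
        = -(z ⬝ᵥ (E *ᵥ z)) - α * (z ⬝ᵥ (F *ᵥ z)) - β * (z ⬝ᵥ (S *ᵥ z)) := by
      simp [sub_mulVec, neg_mulVec, smul_mulVec, dotProduct_sub, dotProduct_neg,
        dotProduct_smul, smul_eq_mul]
    rw [hexpand] at hpos
    -- compute the three quadratic forms
    have hEz : z ⬝ᵥ (E *ᵥ z) = deriv V s := by
      have hd : deriv ζ s = A *ᵥ x + B *ᵥ w := hode s hs
      have hdV : deriv V s = deriv ζ s ⬝ᵥ (Q *ᵥ x) + x ⬝ᵥ (Q *ᵥ deriv ζ s) :=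
        (hVderiv s).deriv
      rw [hdV, hd, hE, hz, quad_blk3]
      simp only [zero_mulVec, dotProduct_zero, add_zero, mulVec_zero, zero_add]
      rw [add_dotProduct, mulVec_add, dotProduct_add]
      rw [dp_swap A x (Q *ᵥ x), dp_swap B w (Q *ᵥ x)]
      rw [Matrix.add_mulVec, dotProduct_add]
      simp only [← Matrix.mulVec_mulVec]
      ring
    have hFz : z ⬝ᵥ (F *ᵥ z) = V s - 1 := by
      rw [hF, hz, quad_blk3]
      simp [sc, dotProduct, mulVec, y, V, x, sub_eq_add_neg]
    have hSz : z ⬝ᵥ (S *ᵥ z) = 1 - (w - ubar) ⬝ᵥ (R *ᵥ (w - ubar)) := by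
      rw [hS, hz, quad_blk3]
      have h1 : y ⬝ᵥ (sc (1 - ubar ⬝ᵥ (R *ᵥ ubar)) *ᵥ y) = 1 - ubar ⬝ᵥ (R *ᵥ ubar) := by
        simp [sc, dotProduct, mulVec, y]
      have h2 : y ⬝ᵥ (rowV (ubar ᵥ* R) *ᵥ w) = (ubar ᵥ* R) ⬝ᵥ w := by
        simp [rowV, dotProduct, mulVec, y]
      have h3 : w ⬝ᵥ (colV (R *ᵥ ubar) *ᵥ y) = w ⬝ᵥ (R *ᵥ ubar) := by
        simp [colV, dotProduct, mulVec, y]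
      rw [h1, h2, h3]
      have h4 : (ubar ᵥ* R) ⬝ᵥ w = ubar ⬝ᵥ (R *ᵥ w) := (Matrix.dotProduct_mulVec ubar R w).symm
      rw [h4]
      simp only [zero_mulVec, dotProduct_zero, mulVec_zero, zero_add, add_zero,
        neg_mulVec, dotProduct_neg, sub_dotProduct, mulVec_sub, dotProduct_sub]
      ring
    have hSnn : 0 ≤ z ⬝ᵥ (S *ᵥ z) := by
      rw [hSz]
      linarith [huc s hs]
    rw [hEz, hFz] at hpos
    nlinarith [mul_nonneg hβ hSnn]
  -- Grönwall-type argument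
  set g : ℝ → ℝ := fun s => Real.exp (α * s) * (V s - 1) with hgdef
  have hg : ∀ s, HasDerivAt g (Real.exp (α * s) * α * (V s - 1) + Real.exp (α * s) * deriv V s) s := by
    intro s
    have he : HasDerivAt (fun s => Real.exp (α * s)) (Real.exp (α * s) * α) s := by
      simpa using ((hasDerivAt_id s).const_mul α).exp
    exact he.mul ((hVderiv s).deriv ▸ ((hVderiv s).sub_const 1))
  have hanti : AntitoneOn g (Set.Ici t₀) := by
    apply antitoneOn_of_deriv_nonpos (convex_Ici t₀)
    · exact fun s _ => ((hg s).differentiableAt).continuousAt.continuousWithinAt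
    · intro s _
      exact ((hg s).differentiableAt).differentiableWithinAt
    · intro s hs
      rw [interior_Ici] at hs
      rw [(hg s).deriv]
      have hb := hkey s (le_of_lt hs)
      have he : (0:ℝ) < Real.exp (α * s) := Real.exp_pos _
      nlinarith
  have hgt := hanti (Set.self_mem_Ici) (Set.mem_Ici.mpr ht) ht
  have hg0 : g t₀ ≤ 0 := by
    have : V t₀ - 1 ≤ 0 := by simpa [V] using sub_nonpos.mpr h0
    exact mul_nonpos_of_nonneg_of_nonpos (le_of_lt (Real.exp_pos _)) this
  have : g t ≤ 0 := le_trans hgt hg0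
  have he : (0:ℝ) < Real.exp (α * t) := Real.exp_pos _
  have h2 : Real.exp (α * t) * (V t - 1) ≤ 0 := this
  have hVt : V t - 1 ≤ 0 := by
    by_contra hcon
    push_neg at hcon
    nlinarith [mul_pos he hcon]
  simpa [V] using sub_nonpos.mp hVt
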